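/- Let F be any field, G any finite group, X a finite transitive G-set, and f a nonzero element of the permutation module F X. Then |supp(f)| · dim_F (F G · f) ≥ |X|. -/

import Mathlib

theorem stmt10 {G X F : Type*} [Group G] [Fintype G] [MulAction G X] [Fintype X]
    [MulAction.IsPretransitive G X] [Field F]
    (f : X →₀ F) (hf : f ≠ 0) :
    f.support.card *
        Module.finrank F (Submodule.span F
          (Set.range fun α : G => MonoidAlgebra.coeffLinearEquiv F
            (Representation.ofMulAction F G X α ((MonoidAlgebra.coeffLinearEquiv F).symm f))))
      ≥ Fintype.card X := by
  classical
  set S : Set (X →₀ F) := Set.range fun α : G => MonoidAlgebra.coeffLinearEquiv F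
    (Representation.ofMulAction F G X α ((MonoidAlgebra.coeffLinearEquiv F).symm f)) with hS
  obtain ⟨t, hts, hsp, hli⟩ := exists_linearIndependent F S
  have htfin : t.Finite := (Set.finite_range _).subset hts
  haveI : Fintype t := htfin.fintype
  -- each element of t has same support card as f
  have hcard : ∀ v ∈ t, (Finsupp.support v).card = f.support.card := by
    intro v hv
    obtain ⟨g, rfl⟩ := hts hv
    show (Finsupp.mapDomain (fun x => g • x) f).support.card = f.support.card
    rw [Finsupp.mapDomain_support_of_injective (MulAction.injective g)]
    exact Finset.card_image_of_injective _ (MulAction.injective g)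
  set T : Finset (X →₀ F) := htfin.toFinset with hT
  set U : Finset X := T.biUnion (fun v => v.support) with hU
  -- every x ∈ X is in U
  have hUuniv : ∀ x : X, x ∈ U := by
    intro x
    obtain ⟨y, hy⟩ := Finsupp.ne_iff.mp hf
    simp only [Finsupp.coe_zero, Pi.zero_apply] at hy
    obtain ⟨g, hg⟩ := MulAction.exists_smul_eq G y x
    have hmem : MonoidAlgebra.coeffLinearEquiv F
        (Representation.ofMulAction F G X g ((MonoidAlgebra.coeffLinearEquiv F).symm f)) ∈ Submodule.span F t := by
      rw [hsp]
      exact Submodule.subset_span ⟨g, rfl⟩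
    have hsup : Submodule.span F t ≤ Finsupp.supported F F (↑U : Set X) := by
      rw [Submodule.span_le]
      intro v hv
      rw [SetLike.mem_coe, Finsupp.mem_supported]
      intro z hz
      simp only [hU, Finset.coe_biUnion, Set.mem_iUnion]
      exact ⟨v, by simpa [hT] using hv, hz⟩
    have := hsup hmem
    rw [Finsupp.mem_supported] at this
    apply this
    rw [Finset.mem_coe, Finsupp.mem_support_iff]
    show (Finsupp.mapDomain (fun x => g • x) f) x ≠ 0
    rw [← hg, Finsupp.mapDomain_apply (MulAction.injective g)]
    simpa using hy
  have h1 : Fintype.card X ≤ U.card := by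
    have : U = Finset.univ := Finset.eq_univ_iff_forall.mpr hUuniv
    rw [this, Finset.card_univ]
  have h2 : U.card ≤ T.card * f.support.card := by
    calc U.card ≤ ∑ v ∈ T, (Finsupp.support v).card := Finset.card_biUnion_le
    _ = ∑ _v ∈ T, f.support.card := by
        apply Finset.sum_congr rfl
        intro v hv
        exact hcard v (by simpa [hT] using hv)
    _ = T.card * f.support.card := by rw [Finset.sum_const, smul_eq_mul]
  have h3 : Module.finrank F (Submodule.span F S) = T.card := by
    rw [← hsp, finrank_span_set_eq_card hli, hT]
    simp [Set.toFinset_card, Set.Finite.card_toFinset]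
  rw [ge_iff_le, h3, mul_comm]
  exact le_trans h1 h2
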